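/- arXiv:math/0607557 — 7 statements merged into one kernel-verified Lean document; each statement's English description precedes it below -/
import Mathlib

section
/- Let S be a locally simply connected topological space and f : S → S a continuous map. Define two fixed points x, y of f to be Nielsen equivalent if there is a path α from x to y such that f ∘ α is homotopic to α rel endpoints. Then Nielsen equivalence is an equivalence relation on Fix(f) = {x : f(x) = x}, and each Nielsen equivalence class is both open and closed in Fix(f) with the subspace topology. -/
/-- Two points `x, y` are Nielsen equivalent for `f` if both are fixed and there is a path
`α` from `x` to `y` such that `f ∘ α` (as a path `β`) is homotopic to `α` rel endpoints. -/
def NielsenRel {S : Type*} [TopologicalSpace S] (f : S → S) (x y : S) : Prop :=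
  f x = x ∧ f y = y ∧
    ∃ α β : Path x y, (∀ s, β s = f (α s)) ∧ α.Homotopic β

lemma nielsenRel_refl {S : Type*} [TopologicalSpace S] (f : S → S) (x : S) (hx : f x = x) :
    NielsenRel f x x :=
  ⟨hx, hx, Path.refl x, Path.refl x, fun _ => hx.symm, Path.Homotopic.refl _⟩

lemma nielsenRel_symm {S : Type*} [TopologicalSpace S] {f : S → S} {x y : S}
    (h : NielsenRel f x y) : NielsenRel f y x := by
  obtain ⟨hx, hy, α, β, hβ, hh⟩ := h
  exact ⟨hy, hx, α.symm, β.symm, fun s => hβ _, hh.map2 (fun F G => F.symm₂) hh⟩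

lemma nielsenRel_trans {S : Type*} [TopologicalSpace S] {f : S → S} {x y z : S}
    (h₁ : NielsenRel f x y) (h₂ : NielsenRel f y z) : NielsenRel f x z := by
  obtain ⟨hx, hy, α₁, β₁, hβ₁, hh₁⟩ := h₁
  obtain ⟨_, hz, α₂, β₂, hβ₂, hh₂⟩ := h₂
  refine ⟨hx, hz, α₁.trans α₂, β₁.trans β₂, fun s => ?_, hh₁.hcomp hh₂⟩
  rw [Path.trans_apply, Path.trans_apply]
  split_ifs <;> simp [hβ₁, hβ₂]

/-- Key local lemma: every fixed point has an open neighborhood in which all fixed points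
are Nielsen equivalent to it. -/
lemma nielsen_local {S : Type*} [TopologicalSpace S]
    (hS : ∀ x : S, ∀ N ∈ nhds x, ∃ U ⊆ N, IsOpen U ∧ x ∈ U ∧ SimplyConnectedSpace U)
    {f : S → S} (hf : Continuous f) (y : S) (hy : f y = y) :
    ∃ U : Set S, IsOpen U ∧ y ∈ U ∧ ∀ z, f z = z → z ∈ U → NielsenRel f y z := by
  obtain ⟨W, -, hWopen, hyW, hWsc⟩ := hS y Set.univ Filter.univ_mem
  have hN : W ∩ f ⁻¹' W ∈ nhds y := by
    refine Filter.inter_mem (hWopen.mem_nhds hyW) ((hWopen.preimage hf).mem_nhds ?_)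
    simp [Set.mem_preimage, hy, hyW]
  obtain ⟨U, hUsub, hUopen, hyU, hUsc⟩ := hS y _ hN
  refine ⟨U, hUopen, hyU, fun z hz hzU => ?_⟩
  haveI := hUsc
  haveI := hWsc
  -- a path from y to z inside U
  let γU := PathConnectedSpace.somePath (⟨y, hyU⟩ : U) ⟨z, hzU⟩
  set α : Path y z := γU.map continuous_subtype_val with hα
  have hmemU : ∀ t, α t ∈ U := fun t => (γU t).2
  have hmemW : ∀ t, α t ∈ W := fun t => (hUsub (hmemU t)).1
  have hfmemW : ∀ t, f (α t) ∈ W := fun t => (hUsub (hmemU t)).2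
  -- the two paths, viewed inside W
  let pW : Path (⟨y, by simpa using hmemW 0⟩ : W) ⟨z, by simpa using hmemW 1⟩ :=
    { toFun := fun t => ⟨α t, hmemW t⟩
      continuous_toFun := α.continuous.subtype_mk _
      source' := Subtype.ext (by simp)
      target' := Subtype.ext (by simp) }
  let qW : Path (⟨y, by simpa using hmemW 0⟩ : W) ⟨z, by simpa using hmemW 1⟩ :=
    { toFun := fun t => ⟨f (α t), hfmemW t⟩
      continuous_toFun := (hf.comp α.continuous).subtype_mk _
      source' := Subtype.ext (by simp [hy])
      target' := Subtype.ext (by simp [hz]) }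
  have hhom : pW.Homotopic qW := SimplyConnectedSpace.paths_homotopic pW qW
  have hmap := hhom.map ⟨Subtype.val, continuous_subtype_val⟩
  refine ⟨hy, hz, pW.map continuous_subtype_val, qW.map continuous_subtype_val,
    fun s => rfl, hmap⟩

/-- On a locally simply connected space, Nielsen equivalence is an equivalence
relation on `Fix f`, and each Nielsen class is open and closed in `Fix f`. -/
theorem stmt_2 {S : Type*} [TopologicalSpace S]
    (hS : ∀ x : S, ∀ N ∈ nhds x, ∃ U ⊆ N, IsOpen U ∧ x ∈ U ∧ SimplyConnectedSpace U)
    (f : S → S) (hf : Continuous f) :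
    Equivalence (fun x y : {z : S // f z = z} => NielsenRel f (x : S) (y : S)) ∧
      ∀ x : {z : S // f z = z},
        IsOpen {y : {z : S // f z = z} | NielsenRel f (x : S) (y : S)} ∧
        IsClosed {y : {z : S // f z = z} | NielsenRel f (x : S) (y : S)} := by
  constructor
  · exact ⟨fun x => nielsenRel_refl f x x.2, fun h => nielsenRel_symm h,
      fun h₁ h₂ => nielsenRel_trans h₁ h₂⟩
  · intro x
    constructor
    · rw [isOpen_iff_mem_nhds]
      rintro y hy
      obtain ⟨U, hUopen, hyU, hU⟩ := nielsen_local hS hf (y : S) y.2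
      have : Subtype.val ⁻¹' U ∈ nhds y :=
        continuous_subtype_val.continuousAt.preimage_mem_nhds (hUopen.mem_nhds hyU)
      refine Filter.mem_of_superset this fun z hz => ?_
      exact nielsenRel_trans hy (hU z z.2 hz)
    · rw [← isOpen_compl_iff, isOpen_iff_mem_nhds]
      rintro y hy
      obtain ⟨U, hUopen, hyU, hU⟩ := nielsen_local hS hf (y : S) y.2
      have : Subtype.val ⁻¹' U ∈ nhds y :=
        continuous_subtype_val.continuousAt.preimage_mem_nhds (hUopen.mem_nhds hyU)
      refine Filter.mem_of_superset this fun z hz hzx => ?_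
      exact hy (nielsenRel_trans hzx (nielsenRel_symm (hU z z.2 hz)))
end

section
/- Let S be a locally simply connected topological space and f : S → S a continuous map whose fixed point set Fix(f) is compact. Then there are only finitely many Nielsen equivalence classes of fixed points of f; that is, Fix(f) is the union of finitely many Nielsen equivalence classes. -/
/-- On a locally simply connected space, if `Fix f` is compact then there are
only finitely many Nielsen classes: `Fix f` is covered by the classes of finitely many
fixed points. -/
theorem stmt_3 {S : Type*} [TopologicalSpace S]
    (hS : ∀ x : S, ∀ N ∈ nhds x, ∃ U ⊆ N, IsOpen U ∧ x ∈ U ∧ SimplyConnectedSpace U)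
    (f : S → S) (hf : Continuous f) (hcpt : IsCompact {z : S | f z = z}) :
    ∃ T : Finset S, (∀ t ∈ T, f t = t) ∧
      ∀ x : S, f x = x → ∃ t ∈ T, NielsenRel f t x := by
  classical
  -- Key: every fixed point has an open neighborhood all of whose fixed points are
  -- Nielsen equivalent to it.
  have key : ∀ x : S, f x = x → ∃ W : Set S, IsOpen W ∧ x ∈ W ∧
      ∀ y : S, f y = y → y ∈ W → NielsenRel f x y := by
    intro x hx
    obtain ⟨U, -, hUopen, hxU, hUsc⟩ := hS x Set.univ Filter.univ_mem
    -- V = U ∩ f⁻¹ U is a neighborhood of x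
    have hVopen : IsOpen (U ∩ f ⁻¹' U) := hUopen.inter (hUopen.preimage hf)
    have hxV : x ∈ U ∩ f ⁻¹' U := ⟨hxU, by simpa [Set.mem_preimage, hx] using hxU⟩
    obtain ⟨W, hWV, hWopen, hxW, hWsc⟩ := hS x (U ∩ f ⁻¹' U) (hVopen.mem_nhds hxV)
    refine ⟨W, hWopen, hxW, fun y hy hyW => ?_⟩
    have : PathConnectedSpace W := @SimplyConnectedSpace.instPathConnectedSpace _ _ hWsc
    obtain ⟨γ⟩ := this.joined ⟨x, hxW⟩ ⟨y, hyW⟩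
    -- the path in S
    set α : Path x y := γ.map continuous_subtype_val with hα
    have hαW : ∀ t, α t ∈ W := fun t => (γ t).2
    have hαU : ∀ t, α t ∈ U := fun t => (hWV (hαW t)).1
    have hfαU : ∀ t, f (α t) ∈ U := fun t => (hWV (hαW t)).2
    -- lift α and f ∘ α to paths in U
    let α' : Path (⟨x, hxU⟩ : U) ⟨y, (hWV hyW).1⟩ :=
      { toFun := fun t => ⟨α t, hαU t⟩
        continuous_toFun := (α.continuous).subtype_mk _
        source' := by simp
        target' := by simp }
    let β' : Path (⟨x, hxU⟩ : U) ⟨y, (hWV hyW).1⟩ :=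
      { toFun := fun t => ⟨f (α t), hfαU t⟩
        continuous_toFun := (hf.comp α.continuous).subtype_mk _
        source' := by simp [hx]
        target' := by simp [hy] }
    have hhom : α'.Homotopic β' := @SimplyConnectedSpace.paths_homotopic _ _ hUsc _ _ α' β'
    have hmap := Path.Homotopic.map hhom ⟨Subtype.val, continuous_subtype_val⟩
    refine ⟨hx, hy, α'.map continuous_subtype_val, β'.map continuous_subtype_val,
      fun s => rfl, hmap⟩
  choose W hWopen hWmem hWnielsen using key
  -- compactness: finite subcover
  obtain ⟨T₀, hT₀⟩ := hcpt.elim_finite_subcover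
    (fun z : {z : S | f z = z} => W z.1 z.2)
    (fun z => hWopen z.1 z.2)
    (fun z hz => Set.mem_iUnion.2 ⟨⟨z, hz⟩, hWmem z hz⟩)
  refine ⟨T₀.image (fun z => z.1), ?_, ?_⟩
  · intro t ht
    obtain ⟨z, -, rfl⟩ := Finset.mem_image.1 ht
    exact z.2
  · intro x hx
    obtain ⟨z, hzT, hzW⟩ := Set.mem_iUnion₂.1 (hT₀ hx)
    exact ⟨z.1, Finset.mem_image.2 ⟨z, hzT, rfl⟩, hWnielsen z.1 z.2 x hx hzW⟩
end

section
/- Let f : ℝ² → ℝ² be a C¹ map (with respect to the Euclidean structure) and let x be a fixed point of f. Then there exists ε₀ > 0 such that for every fixed point y of f with ‖y − x‖ ≤ ε₀ and every point z on the closed straight line segment from x to y, one has ‖f(z) − x‖ ≤ ‖y − x‖. In particular, for every ε ≤ ε₀, if y is a fixed point of f in the ε-ball around x then f maps the segment from x to y into the ε-ball around x. -/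
/-- For a `C¹` map `f` of the Euclidean plane with fixed point `x`, there is
`ε₀ > 0` such that for every fixed point `y` with `‖y - x‖ ≤ ε₀`, `f` maps the straight
segment from `x` to `y` into the closed ball of radius `‖y - x‖` about `x`; in particular,
for every `ε ≤ ε₀`, if `y` is a fixed point in the `ε`-ball about `x` then `f` maps the
segment from `x` to `y` into that `ε`-ball. -/
theorem stmt_5 (f : EuclideanSpace ℝ (Fin 2) → EuclideanSpace ℝ (Fin 2))
    (hf : ContDiff ℝ 1 f) (x : EuclideanSpace ℝ (Fin 2)) (hx : f x = x) :
    ∃ ε₀ > (0 : ℝ),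
      (∀ y, f y = y → ‖y - x‖ ≤ ε₀ →
        ∀ s ∈ Set.Icc (0 : ℝ) 1, ‖f ((1 - s) • x + s • y) - x‖ ≤ ‖y - x‖) ∧
      (∀ ε, 0 < ε → ε ≤ ε₀ → ∀ y, f y = y → y ∈ Metric.ball x ε →
        ∀ s ∈ Set.Icc (0 : ℝ) 1, f ((1 - s) • x + s • y) ∈ Metric.ball x ε) := by
  set A := fderiv ℝ f x with hA
  have hdiff : ∀ z, DifferentiableAt ℝ f z := fun z =>
    hf.differentiable one_ne_zero z
  have hcont : ContinuousAt (fderiv ℝ f) x := (hf.continuous_fderiv one_ne_zero).continuousAt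
  rw [Metric.continuousAt_iff] at hcont
  obtain ⟨δ, hδpos, hδ⟩ := hcont (1/2) (by norm_num)
  refine ⟨δ/2, by positivity, ?_⟩
  have hball : ∀ z ∈ Metric.closedBall x (δ/2), ‖fderiv ℝ f z - A‖ ≤ 1/2 := by
    intro z hz
    have : dist z x < δ := lt_of_le_of_lt (Metric.mem_closedBall.mp hz) (by linarith)
    have := hδ this
    rw [dist_eq_norm] at this
    exact this.le
  have key : ∀ y, f y = y → ‖y - x‖ ≤ δ/2 →
      ∀ s ∈ Set.Icc (0 : ℝ) 1, ‖f ((1 - s) • x + s • y) - x‖ ≤ ‖y - x‖ := by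
    intro y hy hyx s hs
    obtain ⟨hs0, hs1⟩ := hs
    set r := ‖y - x‖ with hr
    have hxmem : x ∈ Metric.closedBall x (δ/2) := Metric.mem_closedBall_self (by positivity)
    have hymem : y ∈ Metric.closedBall x (δ/2) := by
      rw [Metric.mem_closedBall, dist_eq_norm]; exact hyx
    set z := (1 - s) • x + s • y with hz
    have hzmem : z ∈ Metric.closedBall x (δ/2) :=
      (convex_closedBall x (δ/2)) hxmem hymem (by linarith) hs0 (by ring)
    have hconv : Convex ℝ (Metric.closedBall x (δ/2)) := convex_closedBall x (δ/2)
    have h1 : ‖f y - f x - A (y - x)‖ ≤ 1/2 * ‖y - x‖ :=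
      hconv.norm_image_sub_le_of_norm_fderiv_le' (fun w _ => hdiff w) hball hxmem hymem
    have h2 : ‖f z - f y - A (z - y)‖ ≤ 1/2 * ‖z - y‖ :=
      hconv.norm_image_sub_le_of_norm_fderiv_le' (fun w _ => hdiff w) hball hymem hzmem
    have hzy : z - y = (1 - s) • (x - y) := by
      rw [hz]; module
    have hzynorm : ‖z - y‖ = (1 - s) * r := by
      rw [hzy, norm_smul, Real.norm_eq_abs, abs_of_nonneg (by linarith), ← norm_neg, neg_sub]
    rw [hx, hy] at h1
    -- h1 : ‖y - x - A (y - x)‖ ≤ 1/2 * r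
    have hdecomp : f z - x =
        (f z - f y - A (z - y)) + s • (y - x) + (1 - s) • (y - x - A (y - x)) := by
      have hAzy : A (z - y) = -((1 - s) • A (y - x)) := by
        rw [hzy]
        rw [map_smul]
        rw [show (x - y : EuclideanSpace ℝ (Fin 2)) = -(y - x) by module, map_neg]
        module
      rw [hAzy, hy]
      module
    have b1 : ‖f z - f y - A (z - y)‖ ≤ 1/2 * ((1 - s) * r) := hzynorm ▸ h2
    have b2 : ‖s • (y - x)‖ = s * r := by
      rw [norm_smul, Real.norm_eq_abs, abs_of_nonneg hs0]
    have b3 : ‖(1 - s) • (y - x - A (y - x))‖ ≤ (1 - s) * (1/2 * r) := by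
      rw [norm_smul, Real.norm_eq_abs, abs_of_nonneg (by linarith : (0:ℝ) ≤ 1 - s)]
      exact mul_le_mul_of_nonneg_left h1 (by linarith)
    calc ‖f z - x‖ ≤ ‖f z - f y - A (z - y)‖ + ‖s • (y - x)‖
            + ‖(1 - s) • (y - x - A (y - x))‖ := by
          rw [hdecomp]; exact norm_add₃_le
      _ ≤ 1/2 * ((1 - s) * r) + s * r + (1 - s) * (1/2 * r) := by
          rw [b2]; gcongr
      _ = r := by ring
  refine ⟨key, ?_⟩
  intro ε hε hεδ y hy hyball s hs
  have hyx : ‖y - x‖ < ε := by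
    rw [Metric.mem_ball, dist_eq_norm] at hyball; exact hyball
  have := key y hy (le_trans hyx.le hεδ) s hs
  rw [Metric.mem_ball, dist_eq_norm]
  exact lt_of_le_of_lt this hyx
end

section
/- Let f : ℝ² → ℝ² be a C¹ map with f(x) = x, suppose the derivative Df_x has positive determinant, and suppose x is an accumulation point of Fix(f), i.e. x lies in the closure of Fix(f) \ {x}. Then there exists ε > 0 such that for every point p with f(p) ≠ p, ‖p − x‖ < ε, and ‖f(p) − x‖ < ε, the closed straight line segment from p to f(p) contains no fixed point of f. -/
open Filter Asymptotics

set_option maxHeartbeats 1000000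

/-- If a 2D operator has an eigenvector of eigenvalue 1 and another of eigenvalue μ ≤ 0,
its determinant is nonpositive. -/
lemma aux_det_nonpos (A : EuclideanSpace ℝ (Fin 2) →L[ℝ] EuclideanSpace ℝ (Fin 2))
    (u v : EuclideanSpace ℝ (Fin 2)) (hu : u ≠ 0) (hv : v ≠ 0)
    (hAu : A u = u) {μ : ℝ} (hμ : μ ≤ 0) (hAv : A v = μ • v) : A.det ≤ 0 := by
  have li : LinearIndependent ℝ ![u, v] := by
    rw [LinearIndependent.pair_iff]
    intro s t hst
    have h2 : s • u + (t * μ) • v = 0 := by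
      have := congrArg A hst
      simpa [map_add, map_smul, hAu, hAv, smul_smul] using this
    have h3 : (t - t * μ) • v = 0 := by
      have := sub_eq_zero.mpr (hst.trans h2.symm)
      rw [← this]
      module
    have ht : t = 0 := by
      rcases smul_eq_zero.mp h3 with h | h
      · nlinarith
      · exact absurd h hv
    subst ht
    refine ⟨?_, rfl⟩
    simp only [zero_smul, add_zero, smul_eq_zero] at hst
    tauto
  have hcard : Fintype.card (Fin 2) = Module.finrank ℝ (EuclideanSpace ℝ (Fin 2)) := by
    simp [finrank_euclideanSpace_fin]
  let b := basisOfLinearIndependentOfCardEqFinrank li hcard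
  have hb0 : b 0 = u := by
    simp [b, coe_basisOfLinearIndependentOfCardEqFinrank]
  have hb1 : b 1 = v := by
    simp [b, coe_basisOfLinearIndependentOfCardEqFinrank]
  have hdet : A.det = LinearMap.det (A : EuclideanSpace ℝ (Fin 2) →ₗ[ℝ] EuclideanSpace ℝ (Fin 2)) := rfl
  have key : ∀ i, (A : EuclideanSpace ℝ (Fin 2) →ₗ[ℝ] EuclideanSpace ℝ (Fin 2)) (b i) = if i = 0 then b 0 else μ • b 1 := by
    intro i
    fin_cases i
    · simp [hb0, hAu]
    · simp [hb1, hAv]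
  have entry : ∀ i j, LinearMap.toMatrix b b A i j = b.repr (if j = 0 then b 0 else μ • b 1) i := by
    intro i j
    rw [LinearMap.toMatrix_apply, key]
  rw [hdet, ← LinearMap.det_toMatrix b, Matrix.det_fin_two, entry, entry, entry, entry]
  simp [Module.Basis.repr_self_apply]
  exact hμ

/-- Let `f` be a `C¹` map of the plane fixing `x`, with `det Df_x > 0`, and
suppose `x` is an accumulation point of `Fix f`.  Then there is `ε > 0` such that for every
non-fixed point `p` with `p` and `f p` in the `ε`-ball about `x`, the straight segment from
`p` to `f p` contains no fixed point of `f`. -/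
theorem stmt_6 (f : EuclideanSpace ℝ (Fin 2) → EuclideanSpace ℝ (Fin 2))
    (hf : ContDiff ℝ 1 f) (x : EuclideanSpace ℝ (Fin 2)) (hx : f x = x)
    (hdet : 0 < (fderiv ℝ f x).det)
    (hacc : x ∈ closure ({z | f z = z} \ {x})) :
    ∃ ε > (0 : ℝ), ∀ p, f p ≠ p → ‖p - x‖ < ε → ‖f p - x‖ < ε →
      ∀ s ∈ Set.Icc (0 : ℝ) 1,
        f ((1 - s) • p + s • f p) ≠ (1 - s) • p + s • f p := by
  set A := fderiv ℝ f x with hAdef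
  have hdiff := hf.differentiable one_ne_zero
  -- A sequence of fixed points converging to x
  obtain ⟨z, hz, hzt⟩ := mem_closure_iff_seq_limit.mp hacc
  have hzfix : ∀ n, f (z n) = z n := fun n => (hz n).1
  have hzx : ∀ n, z n - x ≠ 0 := fun n => sub_ne_zero.mpr (hz n).2
  set u : ℕ → EuclideanSpace ℝ (Fin 2) := fun n => ‖z n - x‖⁻¹ • (z n - x) with hudef
  have husph : ∀ n, u n ∈ Metric.sphere (0 : EuclideanSpace ℝ (Fin 2)) 1 := by
    intro n
    simp [hudef, mem_sphere_zero_iff_norm, norm_smul,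
      inv_mul_cancel₀ (norm_ne_zero_iff.mpr (hzx n))]
  obtain ⟨w, hwsph, φ, hφ, hφt⟩ :=
    (isCompact_sphere (0 : EuclideanSpace ℝ (Fin 2)) 1).tendsto_subseq husph
  have hw1 : ‖w‖ = 1 := mem_sphere_zero_iff_norm.mp hwsph
  have hwne : w ≠ 0 := by
    intro h; rw [h, norm_zero] at hw1; norm_num at hw1
  -- w is an eigenvector of A with eigenvalue 1
  have hder : HasFDerivAt f A x := (hdiff x).hasFDerivAt
  have hlo : (fun n => f (z n) - f x - A (z n - x)) =o[atTop] fun n => z n - x :=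
    hder.isLittleO.comp_tendsto hzt
  have hquot : Tendsto (fun n => ‖f (z n) - f x - A (z n - x)‖ / ‖z n - x‖) atTop (nhds 0) := by
    refine (isLittleO_iff_tendsto' ?_).mp hlo.norm_norm
    filter_upwards with n h
    exact absurd (norm_eq_zero.mp h) (hzx n)
  have htend : Tendsto (fun n => A (u n) - u n) atTop (nhds 0) := by
    rw [tendsto_zero_iff_norm_tendsto_zero]
    have heq : ∀ n, ‖A (u n) - u n‖ = ‖f (z n) - f x - A (z n - x)‖ / ‖z n - x‖ := by
      intro n
      have h1 : A (u n) - u n = (-‖z n - x‖⁻¹) • (f (z n) - f x - A (z n - x)) := by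
        rw [hzfix n, hx]
        simp only [hudef, map_smul]
        module
      rw [h1, norm_smul, norm_neg, norm_inv, norm_norm, div_eq_inv_mul]
    exact (tendsto_congr heq).mpr hquot
  have hAw : A w = w := by
    have h1 : Tendsto (fun n => A (u (φ n)) - u (φ n)) atTop (nhds 0) :=
      htend.comp hφ.tendsto_atTop
    have h2 : Tendsto (fun n => A (u (φ n)) - u (φ n)) atTop (nhds (A w - w)) :=
      ((A.continuous.tendsto w).comp hφt).sub hφt
    have h3 := tendsto_nhds_unique h2 h1
    exact sub_eq_zero.mp h3
  -- the interpolated operators are injective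
  have hBne : ∀ s ∈ Set.Icc (0:ℝ) 1, ∀ v : EuclideanSpace ℝ (Fin 2), v ≠ 0 →
      (1 - s) • v + s • A v ≠ 0 := by
    intro s hs v hv hBv
    rcases eq_or_lt_of_le hs.1 with h0 | h0
    · apply hv
      rw [← h0] at hBv
      simpa using hBv
    · have h1 : s • A v = (s - 1) • v := by
        linear_combination (norm := module) hBv
      have hAv : A v = (s⁻¹ * (s - 1)) • v := by
        rw [← smul_smul, ← h1, smul_smul, inv_mul_cancel₀ h0.ne', one_smul]
      have hμ : s⁻¹ * (s - 1) ≤ 0 := by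
        have hi : 0 < s⁻¹ := inv_pos.mpr h0
        nlinarith [hs.2]
      have := aux_det_nonpos A w v hwne hv hAw hμ hAv
      linarith
  -- minimum of the norm over the compact set
  have hKc : IsCompact ((Set.Icc (0:ℝ) 1) ×ˢ Metric.sphere (0:EuclideanSpace ℝ (Fin 2)) 1) :=
    isCompact_Icc.prod (isCompact_sphere _ _)
  have hKne : ((Set.Icc (0:ℝ) 1) ×ˢ Metric.sphere (0:EuclideanSpace ℝ (Fin 2)) 1).Nonempty :=
    ⟨(0, w), ⟨⟨le_refl 0, zero_le_one⟩, hwsph⟩⟩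
  have hcont : Continuous fun pr : ℝ × EuclideanSpace ℝ (Fin 2) =>
      ‖(1 - pr.1) • pr.2 + pr.1 • A pr.2‖ := by
    apply Continuous.norm
    exact ((continuous_const.sub continuous_fst).smul continuous_snd).add
      (continuous_fst.smul (A.continuous.comp continuous_snd))
  obtain ⟨⟨s₀, v₀⟩, hmem, hmin⟩ := hKc.exists_isMinOn hKne hcont.continuousOn
  set c := ‖(1 - s₀) • v₀ + s₀ • A v₀‖ with hcdef
  have hv₀ne : v₀ ≠ 0 := by
    intro h
    have := mem_sphere_zero_iff_norm.mp hmem.2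
    rw [h, norm_zero] at this; norm_num at this
  have hcpos : 0 < c :=
    norm_pos_iff.mpr (hBne s₀ hmem.1 v₀ hv₀ne)
  -- uniform lower bound
  have hlow : ∀ s ∈ Set.Icc (0:ℝ) 1, ∀ v : EuclideanSpace ℝ (Fin 2),
      c * ‖v‖ ≤ ‖(1 - s) • v + s • A v‖ := by
    intro s hs v
    rcases eq_or_ne v 0 with rfl | hv
    · simp
    · have hvn : (0:ℝ) < ‖v‖ := norm_pos_iff.mpr hv
      have hmemv : (s, ‖v‖⁻¹ • v) ∈
          (Set.Icc (0:ℝ) 1) ×ˢ Metric.sphere (0:EuclideanSpace ℝ (Fin 2)) 1 := by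
        refine ⟨hs, ?_⟩
        simp [mem_sphere_zero_iff_norm, norm_smul, inv_mul_cancel₀ hvn.ne']
      have h1' := isMinOn_iff.mp hmin (s, ‖v‖⁻¹ • v) hmemv
      have h1 : c ≤ ‖(1 - s) • (‖v‖⁻¹ • v) + s • A (‖v‖⁻¹ • v)‖ := by
        rw [hcdef]
        simpa using h1'
      have h2 : (1 - s) • (‖v‖⁻¹ • v) + s • A (‖v‖⁻¹ • v)
          = ‖v‖⁻¹ • ((1 - s) • v + s • A v) := by
        simp only [map_smul]
        module
      rw [h2, norm_smul, norm_inv, norm_norm] at h1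
      calc c * ‖v‖ ≤ (‖v‖⁻¹ * ‖(1 - s) • v + s • A v‖) * ‖v‖ := by
            apply mul_le_mul_of_nonneg_right h1 (norm_nonneg v)
        _ = ‖(1 - s) • v + s • A v‖ := by
            field_simp
  -- choose ε by continuity of the derivative
  have hcf : Continuous (fderiv ℝ f) := hf.continuous_fderiv one_ne_zero
  have hmem2 : {y | fderiv ℝ f y ∈ Metric.ball A (c/2)} ∈ nhds x :=
    hcf.continuousAt (Metric.ball_mem_nhds A (by linarith))
  obtain ⟨ε, hε, hsub⟩ := Metric.mem_nhds_iff.mp hmem2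
  refine ⟨ε, hε, ?_⟩
  intro p hp hpε hfpε s hs hfix
  set g := f p - p with hgdef
  have hg : g ≠ 0 := sub_ne_zero.mpr hp
  set q := (1 - s) • p + s • f p with hqdef
  have hfp : f p = p + g := by rw [hgdef]; module
  have hq : q = p + s • g := by rw [hqdef, hfp]; module
  have hpball : p ∈ Metric.ball x ε := by rwa [Metric.mem_ball, dist_eq_norm]
  have hfpball : f p ∈ Metric.ball x ε := by rwa [Metric.mem_ball, dist_eq_norm]
  have hqball : q ∈ Metric.ball x ε :=
    (convex_ball x ε) hpball hfpball (by linarith [hs.2]) hs.1 (by ring)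
  have hMVT : ‖(f q - A q) - (f p - A p)‖ ≤ (c/2) * ‖q - p‖ := by
    apply (convex_ball x ε).norm_image_sub_le_of_norm_hasFDerivWithin_le
      (f' := fun y => fderiv ℝ f y - A)
      (fun y _ => ((hdiff y).hasFDerivAt.sub A.hasFDerivAt).hasFDerivWithinAt)
      (fun y hy => ?_) hpball hqball
    have h := hsub hy
    simp only [Set.mem_setOf_eq, Metric.mem_ball, dist_eq_norm] at h
    linarith
  have hcomp : (f q - A q) - (f p - A p) = -((1 - s) • g + s • A g) := by
    rw [hfix, hq, hfp]
    simp only [map_add, map_smul]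
    module
  have hqp : ‖q - p‖ = s * ‖g‖ := by
    rw [hq]
    simp [norm_smul, abs_of_nonneg hs.1]
  rw [hcomp, norm_neg, hqp] at hMVT
  have hlower := hlow s hs g
  have hgn : 0 < ‖g‖ := norm_pos_iff.mpr hg
  have h5 : c / 2 * (s * ‖g‖) ≤ c / 2 * ‖g‖ := by
    nlinarith [mul_nonneg (mul_nonneg (by linarith [hs.2] : (0:ℝ) ≤ 1 - s) hgn.le) hcpos.le]
  have h6 : c * ‖g‖ ≤ c / 2 * ‖g‖ := le_trans (le_trans hlower hMVT) h5
  nlinarith [mul_pos hcpos hgn]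
end

section
/- Let f : ℝ² → ℝ² be a C¹ map with f(x) = x and suppose the derivative Df_x has positive determinant. Then there exists ε > 0 such that for every fixed point y of f with ‖y − x‖ < ε and every point z on the closed straight line segment from x to y, either f(z) = z, or the closed straight line segment from z to f(z) contains no fixed point of f. Consequently, for such y the straight-line homotopy H(t,s) = (1−t)·α(s) + t·f(α(s)), where α parametrizes the segment from x to y, is a homotopy rel Fix(f) from α to f ∘ α. -/
/-- The straight line segment from `p` to `q`, parametrized by `s`. -/
noncomputable def seg (p q : EuclideanSpace ℝ (Fin 2)) (s : ℝ) : EuclideanSpace ℝ (Fin 2) :=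
  (1 - s) • p + s • q

set_option maxHeartbeats 1000000

abbrev E2 := EuclideanSpace ℝ (Fin 2)

lemma decompose (p : E2) : p = p 0 • (EuclideanSpace.single 0 1 : E2) + p 1 • EuclideanSpace.single 1 1 := by
  ext i; fin_cases i <;> simp [EuclideanSpace.single_apply]

lemma map_coord (A : E2 →L[ℝ] E2) (p : E2) (i : Fin 2) :
    A p i = p 0 * A (EuclideanSpace.single 0 1) i + p 1 * A (EuclideanSpace.single 1 1) i := by
  conv_lhs => rw [decompose p]
  simp

lemma det_eq (A : E2 →L[ℝ] E2) :
    A.det = A (EuclideanSpace.single 0 1) 0 * A (EuclideanSpace.single 1 1) 1 -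
            A (EuclideanSpace.single 0 1) 1 * A (EuclideanSpace.single 1 1) 0 := by
  have : A.det = LinearMap.det (A : E2 →ₗ[ℝ] E2) := rfl
  rw [this, ← LinearMap.det_toMatrix (EuclideanSpace.basisFun (Fin 2) ℝ).toBasis, Matrix.det_fin_two]
  simp [LinearMap.toMatrix_apply]; ring

lemma omega_map (A : E2 →L[ℝ] E2) (u v : E2) :
    A u 0 * A v 1 - A u 1 * A v 0 = A.det * (u 0 * v 1 - u 1 * v 0) := by
  rw [det_eq, map_coord A u 0, map_coord A u 1, map_coord A v 0, map_coord A v 1]; ring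

lemma phi_pos (A : E2 →L[ℝ] E2) (hdet : 0 < A.det) (u v : E2) (hu : ‖u‖ = 1) (hv : ‖v‖ = 1)
    (l : ℝ) (hl : l ≤ 0) (h1 : A u = u) (h2 : A v = l • v) : False := by
  have hω := omega_map A u v
  rw [h1, h2] at hω
  simp only [PiLp.smul_apply, smul_eq_mul] at hω
  by_cases hz : u 0 * v 1 - u 1 * v 0 = 0
  · -- v parallel to u
    have hu0 : u ≠ 0 := by intro h; rw [h] at hu; simp at hu
    have hvne : v ≠ 0 := by intro h; rw [h] at hv; simp at hv
    obtain ⟨c, hc⟩ : ∃ c : ℝ, v = c • u := by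
      rcases eq_or_ne (u 0) 0 with h0 | h0
      · have h1' : u 1 ≠ 0 := by
          intro h1'
          apply hu0; ext i; fin_cases i <;> simp [h0, h1']
        refine ⟨v 1 / u 1, ?_⟩
        ext i; fin_cases i <;> simp [PiLp.smul_apply]
        · field_simp
          nlinarith [hz]
        · field_simp
      · refine ⟨v 0 / u 0, ?_⟩
        ext i; fin_cases i <;> simp [PiLp.smul_apply]
        · field_simp
        · field_simp
          nlinarith [hz]
    have hcne : c ≠ 0 := by
      intro h; rw [h, zero_smul] at hc; exact hvne hc
    rw [hc, map_smul, h1, smul_comm] at h2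
    -- h2 : c • u = c • (l • u)
    have h3 : u = l • u := smul_right_injective E2 hcne h2
    have h4 : (1 - l) • u = 0 := by rw [sub_smul, one_smul, ← h3, sub_self]
    rcases smul_eq_zero.mp h4 with h | h
    · linarith
    · exact hu0 h
  · have hdl : A.det * (u 0 * v 1 - u 1 * v 0) = l * (u 0 * v 1 - u 1 * v 0) := by
      rw [← hω]; ring
    have : A.det = l := mul_right_cancel₀ hz hdl
    linarith

lemma eigen_contra (A : E2 →L[ℝ] E2) (hdet : 0 < A.det) :
    ∃ η > (0:ℝ), ∀ u v : E2, ‖u‖ = 1 → ‖v‖ = 1 → ∀ l : ℝ, l ≤ 0 →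
      ‖A u - u‖ ≤ η → ‖A v - l • v‖ ≤ η → False := by
  set M : ℝ := ‖A‖ + 1 with hM
  set S : Set (E2 × E2 × ℝ) :=
    (Metric.sphere 0 1) ×ˢ (Metric.sphere 0 1) ×ˢ (Set.Icc (-M) 0) with hS
  have hcomp : IsCompact S :=
    (isCompact_sphere 0 1).prod ((isCompact_sphere 0 1).prod isCompact_Icc)
  have hMpos : (0:ℝ) < M := by rw [hM]; positivity
  have hne : S.Nonempty :=
    ⟨⟨EuclideanSpace.single 0 1, EuclideanSpace.single 0 1, 0⟩, by simp, by simp,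
      Set.mem_Icc.mpr ⟨by show -M ≤ (0:ℝ); linarith, le_rfl⟩⟩
  set φ : E2 × E2 × ℝ → ℝ := fun p => max ‖A p.1 - p.1‖ ‖A p.2.1 - p.2.2 • p.2.1‖ with hφ
  have hcont : ContinuousOn φ S := by
    apply Continuous.continuousOn
    fun_prop
  obtain ⟨p₀, hp₀S, hp₀min'⟩ := hcomp.exists_isMinOn hne hcont
  have hp₀min : ∀ p ∈ S, φ p₀ ≤ φ p := fun p hp => hp₀min' hp
  have hc : 0 < φ p₀ := by
    rcases lt_or_eq_of_le (le_max_left ‖A p₀.1 - p₀.1‖ ‖A p₀.2.1 - p₀.2.2 • p₀.2.1‖ |>.trans_eq rfl) with _ | _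
    all_goals {
      by_contra h
      push_neg at h
      have h1 : ‖A p₀.1 - p₀.1‖ = 0 := le_antisymm (le_trans (le_max_left _ _) h) (norm_nonneg _)
      have h2 : ‖A p₀.2.1 - p₀.2.2 • p₀.2.1‖ = 0 := le_antisymm (le_trans (le_max_right _ _) h) (norm_nonneg _)
      obtain ⟨hu, hv, hl⟩ := hp₀S
      exact phi_pos A hdet _ _ (by simpa using hu) (by simpa using hv) _ hl.2
        (by rwa [norm_eq_zero, sub_eq_zero] at h1) (by rwa [norm_eq_zero, sub_eq_zero] at h2)
    }
  refine ⟨min (φ p₀) 1 / 2, by positivity, ?_⟩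
  intro u v huu hvv l hl h1 h2
  have hη1 : min (φ p₀) 1 / 2 ≤ 1 / 2 := by
    have := min_le_right (φ p₀) 1; linarith
  rcases le_or_gt (-M) l with hlM | hlM
  · have hmem : (u, v, l) ∈ S := by
      refine ⟨?_, ?_, hlM, hl⟩ <;> simp [huu, hvv]
    have := hp₀min _ hmem
    have : φ (u, v, l) ≤ min (φ p₀) 1 / 2 := by
      simp only [hφ]
      exact max_le h1 h2
    have h3 : min (φ p₀) 1 / 2 < φ p₀ := by
      rcases min_cases (φ p₀) 1 with ⟨h, _⟩ | ⟨h, h'⟩ <;> rw [h] <;> linarith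
    have := hp₀min _ hmem
    linarith
  · -- |l| large: ‖A v - l • v‖ ≥ -l - ‖A‖ ≥ 1
    have hAv : ‖A v‖ ≤ ‖A‖ := by
      calc ‖A v‖ ≤ ‖A‖ * ‖v‖ := A.le_opNorm v
      _ = ‖A‖ := by rw [hvv, mul_one]
    have : ‖A v - l • v‖ ≥ ‖l • v‖ - ‖A v‖ := by
      have := norm_sub_norm_le (l • v) (A v)
      have h := norm_sub_rev (A v) (l • v)
      rw [← norm_sub_rev]; linarith [norm_sub_norm_le (l • v) (A v)]
    rw [norm_smul, hvv, mul_one] at this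
    have habs : ‖l‖ = -l := by
      rw [Real.norm_eq_abs]; exact abs_of_neg (by linarith)
    rw [habs] at this
    have hMA : M = ‖A‖ + 1 := hM
    linarith

lemma approx (f : E2 → E2) (hf : ContDiff ℝ 1 f) (x : E2) (η : ℝ) (hη : 0 < η) :
    ∃ δ > (0:ℝ), ∀ p ∈ Metric.ball x δ, ∀ q ∈ Metric.ball x δ,
      ‖f q - f p - fderiv ℝ f x (q - p)‖ ≤ η * ‖q - p‖ := by
  set A := fderiv ℝ f x with hA
  have hcontd : Continuous (fderiv ℝ f) := hf.continuous_fderiv one_ne_zero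
  obtain ⟨δ, hδ, hball⟩ := Metric.continuousAt_iff.mp (hcontd.continuousAt (x := x)) η hη
  refine ⟨δ, hδ, ?_⟩
  intro p hp q hq
  have hconv : Convex ℝ (Metric.ball x δ) := convex_ball x δ
  have hder : ∀ z ∈ Metric.ball x δ,
      HasFDerivWithinAt (fun w => f w - A w) (fderiv ℝ f z - A) (Metric.ball x δ) z := by
    intro z hz
    exact ((hf.differentiable one_ne_zero z).hasFDerivAt.sub A.hasFDerivAt).hasFDerivWithinAt
  have hbound : ∀ z ∈ Metric.ball x δ, ‖fderiv ℝ f z - A‖ ≤ η := by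
    intro z hz
    have := hball (Metric.mem_ball.mp hz)
    rw [dist_eq_norm] at this
    exact this.le
  have := hconv.norm_image_sub_le_of_norm_hasFDerivWithin_le hder hbound hp hq
  calc ‖f q - f p - A (q - p)‖ = ‖(f q - A q) - (f p - A p)‖ := by rw [map_sub]; abel_nf
  _ ≤ η * ‖q - p‖ := this

lemma seg_eq (p q : E2) (t : ℝ) : seg p q t = p + t • (q - p) := by
  simp only [seg]; module

lemma seg_self (p : E2) (t : ℝ) : seg p p t = p := by
  rw [seg_eq]; simp

/-- Let `f` be a `C¹` map of the plane fixing `x` with `det Df_x > 0`.  There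
is `ε > 0` such that for every fixed point `y` with `‖y - x‖ < ε` and every `z` on the
segment from `x` to `y`, either `f z = z` or the segment from `z` to `f z` contains no
fixed point of `f`; consequently the straight-line homotopy
`H t s = (1 - t) • α s + t • f (α s)`, where `α = seg x y` parametrizes the segment from
`x` to `y`, is a homotopy rel `Fix f` from `α` to `f ∘ α`. -/
theorem stmt_8 (f : EuclideanSpace ℝ (Fin 2) → EuclideanSpace ℝ (Fin 2))
    (hf : ContDiff ℝ 1 f) (x : EuclideanSpace ℝ (Fin 2)) (hx : f x = x)
    (hdet : 0 < (fderiv ℝ f x).det) :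
    ∃ ε > (0 : ℝ), ∀ y, f y = y → ‖y - x‖ < ε →
      (∀ s ∈ Set.Icc (0 : ℝ) 1,
        f (seg x y s) = seg x y s ∨
        ∀ t ∈ Set.Icc (0 : ℝ) 1,
          f (seg (seg x y s) (f (seg x y s)) t) ≠ seg (seg x y s) (f (seg x y s)) t) ∧
      -- the straight-line homotopy `H t s = seg (α s) (f (α s)) t` is a homotopy
      -- rel `Fix f` from `α` to `f ∘ α`, where `α = seg x y`:
      (ContinuousOn (fun q : ℝ × ℝ => seg (seg x y q.2) (f (seg x y q.2)) q.1)
          (Set.Icc 0 1 ×ˢ Set.Icc 0 1) ∧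
        (∀ s ∈ Set.Icc (0 : ℝ) 1,
          seg (seg x y s) (f (seg x y s)) 0 = seg x y s ∧
          seg (seg x y s) (f (seg x y s)) 1 = f (seg x y s)) ∧
        (∀ t ∈ Set.Icc (0 : ℝ) 1,
          seg (seg x y 0) (f (seg x y 0)) t = x ∧
          seg (seg x y 1) (f (seg x y 1)) t = y) ∧
        (∀ s ∈ Set.Icc (0 : ℝ) 1, ∀ t₀ ∈ Set.Icc (0 : ℝ) 1,
          seg (seg x y s) (f (seg x y s)) t₀ ∈ {z | f z = z} →
          ∀ t ∈ Set.Icc (0 : ℝ) 1,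
            seg (seg x y s) (f (seg x y s)) t =
              seg (seg x y s) (f (seg x y s)) t₀)) := by
  classical
  set A := fderiv ℝ f x with hA
  obtain ⟨η, hη, hP⟩ := eigen_contra A hdet
  set η' := min η 1 with hη'def
  have hη'pos : 0 < η' := lt_min hη one_pos
  have hη'le : η' ≤ η := min_le_left _ _
  have hη'1 : η' ≤ 1 := min_le_right _ _
  obtain ⟨δ, hδ, hest⟩ := approx f hf x η' hη'pos
  set C : ℝ := ‖A‖ + 3 with hCdef
  have hC1 : 1 ≤ C := by have := norm_nonneg A; rw [hCdef]; linarith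
  have hCpos : 0 < C := by linarith
  refine ⟨δ / C, by positivity, ?_⟩
  intro y hy hyx
  have hyδ : ‖y - x‖ < δ := lt_of_lt_of_le hyx (by
    rw [div_le_iff₀ hCpos] at *
    nlinarith [hδ, hC1])
  have key : ∀ s ∈ Set.Icc (0:ℝ) 1, f (seg x y s) = seg x y s ∨
      ∀ t ∈ Set.Icc (0:ℝ) 1,
        f (seg (seg x y s) (f (seg x y s)) t) ≠ seg (seg x y s) (f (seg x y s)) t := by
    intro s hs
    by_cases hfz : f (seg x y s) = seg x y s
    · exact Or.inl hfz
    right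
    intro t ht hfw
    set z := seg x y s with hzdef
    have hyne : y ≠ x := by
      intro h
      apply hfz
      have : z = x := by rw [hzdef, h, seg_eq]; simp
      rw [this, hx]
    have hyxpos : (0:ℝ) < ‖y - x‖ := by
      rw [norm_pos_iff, sub_ne_zero]; exact hyne
    have hzx : z - x = s • (y - x) := by rw [hzdef, seg_eq]; abel
    have hzxle : ‖z - x‖ ≤ ‖y - x‖ := by
      rw [hzx, norm_smul, Real.norm_eq_abs, abs_of_nonneg hs.1]
      nlinarith [hs.2, hyxpos]
    have hxball : x ∈ Metric.ball x δ := Metric.mem_ball_self hδ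
    have hzball : z ∈ Metric.ball x δ := by
      rw [Metric.mem_ball, dist_eq_norm]; linarith
    have hyball : y ∈ Metric.ball x δ := by
      rw [Metric.mem_ball, dist_eq_norm]; exact hyδ
    -- estimate for u
    have hu1 := hest x hxball y hyball
    rw [hy, hx] at hu1
    set u : E2 := ‖y - x‖⁻¹ • (y - x) with hudef
    have huu : ‖u‖ = 1 := by
      rw [hudef, norm_smul, norm_inv, norm_norm]
      field_simp
    have hAu : ‖A u - u‖ ≤ η := by
      have h1 : A u - u = ‖y - x‖⁻¹ • (A (y - x) - (y - x)) := by
        rw [hudef, map_smul]; module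
      have h2 : ‖A (y - x) - (y - x)‖ ≤ η' * ‖y - x‖ := by
        rw [norm_sub_rev]; exact hu1
      rw [h1, norm_smul, norm_inv, norm_norm]
      calc ‖y - x‖⁻¹ * ‖A (y - x) - (y - x)‖ ≤ ‖y - x‖⁻¹ * (η' * ‖y - x‖) := by
            apply mul_le_mul_of_nonneg_left h2 (by positivity)
        _ = η' := by field_simp
        _ ≤ η := hη'le
    -- the displacement g
    set g : E2 := f z - z with hgdef
    have hgne : g ≠ 0 := sub_ne_zero.mpr hfz
    have hgpos : (0:ℝ) < ‖g‖ := norm_pos_iff.mpr hgne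
    have hz1 := hest x hxball z hzball
    rw [hx] at hz1
    have hgbound : ‖g‖ ≤ (‖A‖ + 2) * ‖z - x‖ := by
      have hsplit : g = (f z - x - A (z - x)) + (A (z - x) - (z - x)) := by
        rw [hgdef]; abel
      rw [hsplit]
      calc ‖(f z - x - A (z - x)) + (A (z - x) - (z - x))‖
          ≤ ‖f z - x - A (z - x)‖ + ‖A (z - x) - (z - x)‖ := norm_add_le _ _
        _ ≤ η' * ‖z - x‖ + (‖A (z - x)‖ + ‖z - x‖) := add_le_add hz1 (norm_sub_le _ _)
        _ ≤ 1 * ‖z - x‖ + (‖A‖ * ‖z - x‖ + ‖z - x‖) := by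
            have := A.le_opNorm (z - x)
            have hn : (0:ℝ) ≤ ‖z - x‖ := norm_nonneg _
            nlinarith
        _ = (‖A‖ + 2) * ‖z - x‖ := by ring
    set w := seg z (f z) t with hwdef
    have hwz : w - z = t • g := by rw [hwdef, seg_eq, hgdef]; abel
    have hwball : w ∈ Metric.ball x δ := by
      rw [Metric.mem_ball, dist_eq_norm]
      have hsplit : w - x = (w - z) + (z - x) := by abel
      have h1 : ‖w - x‖ ≤ ‖w - z‖ + ‖z - x‖ := by rw [hsplit]; exact norm_add_le _ _
      have h2 : ‖w - z‖ ≤ ‖g‖ := by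
        rw [hwz, norm_smul, Real.norm_eq_abs, abs_of_nonneg ht.1]
        nlinarith [ht.2, hgpos]
      have h3 : ‖w - x‖ ≤ C * ‖z - x‖ := by
        rw [hCdef]; nlinarith [norm_nonneg (z - x)]
      have h4 : C * ‖z - x‖ < δ := by
        have : ‖z - x‖ < δ / C := lt_of_le_of_lt hzxle hyx
        calc C * ‖z - x‖ < C * (δ / C) := by
              apply mul_lt_mul_of_pos_left this hCpos
          _ = δ := by field_simp
      linarith
    have htne : t ≠ 0 := by
      intro h
      apply hfz
      have hw0 : w = z := by rw [hwdef, h, seg_eq]; simp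
      rwa [hw0] at hfw
    have htpos : 0 < t := lt_of_le_of_ne ht.1 (Ne.symm htne)
    -- second estimate
    have h2 := hest z hzball w hwball
    have hfww : f w = w := hfw
    rw [hfww] at h2
    set l : ℝ := (t - 1) / t with hldef
    have hl : l ≤ 0 := by
      rw [hldef]
      apply div_nonpos_of_nonpos_of_nonneg (by linarith [ht.2]) htpos.le
    have htl : t * l = t - 1 := by rw [hldef]; field_simp
    have hkey : ‖A g - l • g‖ ≤ η' * ‖g‖ := by
      have hid : w - f z - A (w - z) = t • (l • g - A g) := by
        have hfz' : f z = z + g := by rw [hgdef]; abel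
        have hw' : w = z + t • g := by
          have h5 := hwz
          rw [sub_eq_iff_eq_add] at h5
          rw [h5]; abel
        have hAwz : A (w - z) = t • A g := by rw [hwz, map_smul]
        have hwfz : w - f z = (t - 1) • g := by rw [hw', hfz']; module
        rw [hAwz, hwfz, ← htl]
        module
      rw [hid] at h2
      rw [norm_smul, Real.norm_eq_abs, abs_of_pos htpos] at h2
      rw [hwz, norm_smul, Real.norm_eq_abs, abs_of_pos htpos] at h2
      have h3 : ‖l • g - A g‖ ≤ η' * ‖g‖ := by
        have := mul_le_mul_of_nonneg_left h2 (inv_nonneg.mpr htpos.le)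
        rw [← mul_assoc, inv_mul_cancel₀ htne, one_mul] at this
        calc ‖l • g - A g‖ = t⁻¹ * (t * ‖l • g - A g‖) := by
              rw [← mul_assoc, inv_mul_cancel₀ htne, one_mul]
          _ ≤ t⁻¹ * (t * (η' * ‖g‖)) := by
              apply mul_le_mul_of_nonneg_left _ (inv_nonneg.mpr htpos.le)
              calc t * ‖l • g - A g‖ ≤ η' * (t * ‖g‖) := h2
                _ = t * (η' * ‖g‖) := by ring
          _ = η' * ‖g‖ := by field_simp
      rw [norm_sub_rev] at h3
      exact h3
    set v : E2 := ‖g‖⁻¹ • g with hvdef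
    have hvv : ‖v‖ = 1 := by
      rw [hvdef, norm_smul, norm_inv, norm_norm]; field_simp
    have hAv : ‖A v - l • v‖ ≤ η := by
      have h1 : A v - l • v = ‖g‖⁻¹ • (A g - l • g) := by
        rw [hvdef, map_smul]; module
      rw [h1, norm_smul, norm_inv, norm_norm]
      calc ‖g‖⁻¹ * ‖A g - l • g‖ ≤ ‖g‖⁻¹ * (η' * ‖g‖) := by
            apply mul_le_mul_of_nonneg_left hkey (by positivity)
        _ = η' := by field_simp
        _ ≤ η := hη'le
    exact hP u v huu hvv l hl hAu hAv
  refine ⟨key, ?_, ?_, ?_, ?_⟩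
  · apply Continuous.continuousOn
    have hfc := hf.continuous
    unfold seg
    fun_prop
  · intro s hs
    constructor
    · rw [seg_eq]; simp
    · rw [seg_eq]; simp
  · intro t ht
    have h0 : seg x y 0 = x := by rw [seg_eq]; simp
    have h1 : seg x y 1 = y := by rw [seg_eq]; simp
    constructor
    · rw [h0, hx, seg_self]
    · rw [h1, hy, seg_self]
  · intro s hs t₀ ht₀ hfix t ht
    rcases key s hs with hfz | hnone
    · rw [hfz, seg_self, seg_self]
    · exact absurd hfix (hnone t₀ ht₀)
end

section
/- Let f : ℝ² → ℝ² be a C¹ diffeomorphism with positive Jacobian determinant at every point, and let K ⊆ ℝ² be a compact set with f(K) = K such that Fix(f) ∩ K is open in K (subspace topology). Then f has locally constant Nielsen behavior rel K: for every x ∈ Fix(f) and every neighborhood N of x, there exist open sets U and V with x ∈ U ⊆ V ⊆ N such that for every y ∈ U ∩ Fix(f) there is a path α : [0,1] → ℝ² from x to y with image contained in U, together with a homotopy rel K from α to f ∘ α whose image is contained in V. -/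
set_option maxHeartbeats 2000000

/-- `α : ℝ → X`, restricted to `[0,1]`, is a path from `x` to `y`. -/
def IsPathFromTo {X : Type*} [TopologicalSpace X] (α : ℝ → X) (x y : X) : Prop :=
  ContinuousOn α (Set.Icc 0 1) ∧ α 0 = x ∧ α 1 = y

/-- `H` is a homotopy rel `K` from `α` to `β` (paths from `x` to `y`) whose image is
contained in `V`. -/
def HomotopyRelIn {X : Type*} [TopologicalSpace X] (K V : Set X) (x y : X)
    (α β : ℝ → X) : Prop :=
  ∃ H : ℝ → ℝ → X,
    ContinuousOn (fun p : ℝ × ℝ => H p.1 p.2) (Set.Icc 0 1 ×ˢ Set.Icc 0 1) ∧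
    (∀ s ∈ Set.Icc (0 : ℝ) 1, H 0 s = α s ∧ H 1 s = β s) ∧
    (∀ t ∈ Set.Icc (0 : ℝ) 1, H t 0 = x ∧ H t 1 = y) ∧
    (∀ s ∈ Set.Icc (0 : ℝ) 1, ∀ t₀ ∈ Set.Icc (0 : ℝ) 1, H t₀ s ∈ K →
      ∀ t ∈ Set.Icc (0 : ℝ) 1, H t s = H t₀ s) ∧
    (∀ t ∈ Set.Icc (0 : ℝ) 1, ∀ s ∈ Set.Icc (0 : ℝ) 1, H t s ∈ V)

open Set Metric Function
open scoped RealInnerProductSpace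

local notation "E2" => EuclideanSpace ℝ (Fin 2)

/-- Two-point estimate from strict differentiability. -/
lemma strict_two_point {v : E2 → E2} {B : E2 →L[ℝ] E2} {x : E2}
    (h : HasStrictFDerivAt v B x) {c : ℝ} (hc : 0 < c) :
    ∃ δ > 0, ∀ p ∈ ball x δ, ∀ q ∈ ball x δ, ‖v p - v q - B (p - q)‖ ≤ c * ‖p - q‖ := by
  have H := h.isLittleO.def hc
  rw [nhds_prod_eq] at H
  rw [Filter.eventually_iff, Filter.mem_prod_same_iff] at H
  obtain ⟨s, hs, hss⟩ := H
  obtain ⟨δ, hδ, hball⟩ := Metric.mem_nhds_iff.1 hs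
  refine ⟨δ, hδ, fun p hp q hq => ?_⟩
  simpa using hss (Set.mk_mem_prod (hball hp) (hball hq))

lemma range_span (B : E2 →L[ℝ] E2) (u k : E2) (hu : B u ≠ 0) (hk : k ≠ 0) (hkB : B k = 0) :
    ∀ z, ∃ c : ℝ, B z = c • B u := by
  intro z
  have h1 : LinearMap.range (B : E2 →ₗ[ℝ] E2) = Submodule.span ℝ {B u} := by
    have hle : Submodule.span ℝ {B u} ≤ LinearMap.range (B : E2 →ₗ[ℝ] E2) := by
      rw [Submodule.span_le]; rintro w rfl; exact ⟨u, rfl⟩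
    refine (Submodule.eq_of_le_of_finrank_le hle ?_).symm
    have hrn := LinearMap.finrank_range_add_finrank_ker (B : E2 →ₗ[ℝ] E2)
    have hker : 0 < Module.finrank ℝ (LinearMap.ker (B : E2 →ₗ[ℝ] E2)) := by
      refine Module.finrank_pos_iff_exists_ne_zero.mpr ⟨⟨k, ?_⟩, ?_⟩
      · simpa [LinearMap.mem_ker] using hkB
      · simpa using hk
    have hsp : Module.finrank ℝ (Submodule.span ℝ {B u}) = 1 := finrank_span_singleton hu
    simp only [finrank_euclideanSpace, Fintype.card_fin] at hrn
    omega
  have := h1 ▸ LinearMap.mem_range_self (B : E2 →ₗ[ℝ] E2) z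
  rw [Submodule.mem_span_singleton] at this
  obtain ⟨c, hc⟩ := this
  exact ⟨c, hc.symm⟩

lemma ker_span (B : E2 →L[ℝ] E2) (u k : E2) (hu : B u ≠ 0) (hk : k ≠ 0) (hkB : B k = 0) :
    ∀ z, B z = 0 → ∃ c : ℝ, z = c • k := by
  intro z hz
  have h1 : LinearMap.ker (B : E2 →ₗ[ℝ] E2) = Submodule.span ℝ {k} := by
    have hle : Submodule.span ℝ {k} ≤ LinearMap.ker (B : E2 →ₗ[ℝ] E2) := by
      rw [Submodule.span_le]; rintro w rfl; simpa [LinearMap.mem_ker] using hkB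
    refine (Submodule.eq_of_le_of_finrank_le hle ?_).symm
    have hrn := LinearMap.finrank_range_add_finrank_ker (B : E2 →ₗ[ℝ] E2)
    have hrg : 0 < Module.finrank ℝ (LinearMap.range (B : E2 →ₗ[ℝ] E2)) := by
      refine Module.finrank_pos_iff_exists_ne_zero.mpr ⟨⟨B u, ⟨u, rfl⟩⟩, ?_⟩
      exact fun hzero => hu (by simpa using congrArg Subtype.val hzero)
    have hsp : Module.finrank ℝ (Submodule.span ℝ {k}) = 1 := finrank_span_singleton hk
    simp only [finrank_euclideanSpace, Fintype.card_fin] at hrn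
    omega
  have hzz : z ∈ LinearMap.ker (B : E2 →ₗ[ℝ] E2) := by simpa [LinearMap.mem_ker] using hz
  rw [h1, Submodule.mem_span_singleton] at hzz
  obtain ⟨c, hc⟩ := hzz
  exact ⟨c, hc.symm⟩

lemma inner_rep (B : E2 →L[ℝ] E2) (u : E2) (hu : B u ≠ 0)
    (hspan : ∀ z, ∃ c : ℝ, B z = c • B u) :
    ∀ z, (⟪(‖B u‖⁻¹ • B u : E2), B z⟫) • (‖B u‖⁻¹ • B u : E2) = B z := by
  intro z
  obtain ⟨c, hc⟩ := hspan z
  have hn : ‖B u‖ ≠ 0 := norm_ne_zero_iff.2 hu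
  rw [hc]
  rw [real_inner_smul_left, real_inner_smul_right, real_inner_self_eq_norm_sq, smul_smul]
  congr 1
  rw [pow_two]
  field_simp

lemma norm_e (B : E2 →L[ℝ] E2) (u : E2) (hu : B u ≠ 0) : ‖(‖B u‖⁻¹ • B u : E2)‖ = 1 := by
  have hn : ‖B u‖ ≠ 0 := norm_ne_zero_iff.2 hu
  rw [norm_smul]
  simp [abs_of_nonneg (inv_nonneg.2 (norm_nonneg _)), inv_mul_cancel₀ hn]

lemma mem_ball_track {x p w : E2} {ρ₁ ρ₂ t : ℝ} (hp : p ∈ ball x ρ₁) (hw : ‖w‖ < ρ₂ - ρ₁)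
    (ht : t ∈ Icc (0:ℝ) 1) : p + t • w ∈ ball x ρ₂ := by
  rw [mem_ball, dist_eq_norm]
  have h1 : p + t • w - x = (p - x) + t • w := by abel
  have h2 : ‖t • w‖ ≤ ‖w‖ := by
    rw [norm_smul, Real.norm_eq_abs, abs_of_nonneg ht.1]
    calc t * ‖w‖ ≤ 1 * ‖w‖ := mul_le_mul_of_nonneg_right ht.2 (norm_nonneg _)
      _ = ‖w‖ := one_mul _
  have h3 : ‖p - x‖ < ρ₁ := by rw [← dist_eq_norm]; exact mem_ball.1 hp
  calc ‖p + t • w - x‖ = ‖(p - x) + t • w‖ := by rw [h1]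
    _ ≤ ‖p - x‖ + ‖t • w‖ := norm_add_le _ _
    _ < ρ₁ + (ρ₂ - ρ₁) := by apply add_lt_add_of_lt_of_le h3; exact le_of_lt (lt_of_le_of_lt h2 hw)
    _ = ρ₂ := by ring

lemma straight_path (x y : E2) (ρ : ℝ) (hy : y ∈ ball x ρ) :
    ∃ α : ℝ → E2, IsPathFromTo α x y ∧ α '' Icc 0 1 ⊆ ball x ρ := by
  refine ⟨fun s => x + s • (y - x), ⟨?_, by simp, by simp⟩, ?_⟩
  · exact (continuous_const.add (continuous_id.smul continuous_const)).continuousOn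
  · rintro z ⟨s, hs, rfl⟩
    rw [mem_ball, dist_eq_norm]
    have h1 : ‖x + s • (y - x) - x‖ = |s| * ‖y - x‖ := by
      rw [add_sub_cancel_left, norm_smul, Real.norm_eq_abs]
    rw [h1]
    have habs : |s| ≤ 1 := by rw [abs_le]; exact ⟨by linarith [hs.1], hs.2⟩
    calc |s| * ‖y - x‖ ≤ 1 * ‖y - x‖ := mul_le_mul_of_nonneg_right habs (norm_nonneg _)
      _ = ‖y - x‖ := one_mul _
      _ < ρ := by rw [← dist_eq_norm]; exact mem_ball.1 hy

/-- Main construction: straight-line homotopy from `α` to `f ∘ α`, assuming the key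
rel-`K` property holds on `Γ` and the path can be chosen inside `U ∩ Γ`. -/
lemma build_aux (f : E2 → E2) (hf : Continuous f) (K : Set E2)
    (x : E2) (hx : f x = x) (N : Set E2)
    (ρ₁ ρ₂ : ℝ) (h12 : ρ₁ < ρ₂)
    (hVN : ball x ρ₂ ⊆ N)
    (hv : ∀ p ∈ ball x ρ₁, ‖f p - p‖ < ρ₂ - ρ₁)
    (U : Set E2) (hUopen : IsOpen U) (hxU : x ∈ U) (hUb : U ⊆ ball x ρ₁)
    (Γ : Set E2)
    (hKey : ∀ p ∈ Γ, p ∈ ball x ρ₁ → ∀ t ∈ Icc (0:ℝ) 1, p + t • (f p - p) ∈ K → f p = p)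
    (hpath : ∀ y ∈ U, f y = y → ∃ α : ℝ → E2, IsPathFromTo α x y ∧ α '' Icc 0 1 ⊆ U ∩ Γ) :
    ∃ U' V : Set E2, IsOpen U' ∧ IsOpen V ∧ x ∈ U' ∧ U' ⊆ V ∧ V ⊆ N ∧
      ∀ y ∈ U', f y = y →
        ∃ α : ℝ → E2, IsPathFromTo α x y ∧ α '' Icc 0 1 ⊆ U' ∧
          HomotopyRelIn K V x y α (f ∘ α) := by
  refine ⟨U, ball x ρ₂, hUopen, isOpen_ball, hxU,
    hUb.trans (ball_subset_ball h12.le), hVN, ?_⟩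
  intro y hyU hy
  obtain ⟨α, hα, hαim⟩ := hpath y hyU hy
  obtain ⟨hαc, hα0, hα1⟩ := hα
  have himg : ∀ s ∈ Icc (0:ℝ) 1, α s ∈ U ∩ Γ := fun s hs => hαim ⟨s, hs, rfl⟩
  refine ⟨α, ⟨hαc, hα0, hα1⟩, fun z hz => (hαim hz).1, ?_⟩
  have hVmem : ∀ t ∈ Icc (0:ℝ) 1, ∀ s ∈ Icc (0:ℝ) 1,
      α s + t • (f (α s) - α s) ∈ ball x ρ₂ := by
    intro t ht s hs
    have hm := himg s hs
    exact mem_ball_track (hUb hm.1) (hv _ (hUb hm.1)) ht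
  refine ⟨fun t s => α s + t • (f (α s) - α s), ?_, ?_, ?_, ?_, hVmem⟩
  · have hαc2 : ContinuousOn (fun p : ℝ × ℝ => α p.2) (Icc 0 1 ×ˢ Icc 0 1) :=
      hαc.comp continuous_snd.continuousOn (fun p hp => hp.2)
    exact hαc2.add ((continuous_fst.continuousOn).smul
      (((hf.comp_continuousOn hαc2)).sub hαc2))
  · intro s hs
    constructor
    · simp
    · simp
  · intro t ht
    constructor
    · simp [hα0, hx]
    · simp [hα1, hy]
  · intro s hs t₀ ht₀ hK t ht
    have hm := himg s hs
    have hfix : f (α s) = α s := hKey (α s) hm.2 (hUb hm.1) t₀ ht₀ hK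
    simp [hfix]

/-- A `C¹` diffeomorphism `f` of the plane with everywhere positive Jacobian
has locally constant Nielsen behavior rel any compact invariant set `K` such that
`Fix f ∩ K` is open in `K`. -/
theorem stmt_10 (f : EuclideanSpace ℝ (Fin 2) → EuclideanSpace ℝ (Fin 2))
    (hdiff : ContDiff ℝ 1 f)
    (hinv : ∃ g : EuclideanSpace ℝ (Fin 2) → EuclideanSpace ℝ (Fin 2),
      ContDiff ℝ 1 g ∧ Function.LeftInverse g f ∧ Function.RightInverse g f)
    (hjac : ∀ z, 0 < (fderiv ℝ f z).det)
    (K : Set (EuclideanSpace ℝ (Fin 2))) (hKcpt : IsCompact K) (hKinv : f '' K = K)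
    (hKopen : IsOpen ((fun y : K => (y : EuclideanSpace ℝ (Fin 2))) ⁻¹' {z | f z = z})) :
    ∀ x, f x = x → ∀ N ∈ nhds x,
      ∃ U V : Set (EuclideanSpace ℝ (Fin 2)),
        IsOpen U ∧ IsOpen V ∧ x ∈ U ∧ U ⊆ V ∧ V ⊆ N ∧
        ∀ y ∈ U, f y = y →
          ∃ α : ℝ → EuclideanSpace ℝ (Fin 2),
            IsPathFromTo α x y ∧ α '' Set.Icc 0 1 ⊆ U ∧
            HomotopyRelIn K V x y α (f ∘ α) := by
  intro x hx N hN
  obtain ⟨ε, hε, hεN⟩ := Metric.mem_nhds_iff.1 hN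
  have hfc : Continuous f := hdiff.continuous
  have hvx : f x - x = 0 := sub_eq_zero_of_eq hx
  -- smallness of the displacement near x
  have hsmall : ∀ c > (0:ℝ), ∃ δ > (0:ℝ), ∀ p ∈ ball x δ, ‖f p - p‖ < c := by
    intro c hc
    have hvc : ContinuousAt (fun z => f z - z) x := (hfc.sub continuous_id).continuousAt
    obtain ⟨δ, hδ, hd⟩ := Metric.continuousAt_iff.1 hvc c hc
    refine ⟨δ, hδ, fun p hp => ?_⟩
    have := hd (mem_ball.1 hp)
    rwa [hvx, dist_zero_right] at this
  by_cases hxK : x ∈ K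
  swap
  · -- x is not in K : a small ball around x misses K entirely
    have hKc : IsClosed K := hKcpt.isClosed
    obtain ⟨ε₂, hε₂, hball2⟩ := Metric.mem_nhds_iff.1 (hKc.isOpen_compl.mem_nhds hxK)
    set ρ₂ := min ε ε₂ with hρ₂def
    have hρ₂ : 0 < ρ₂ := lt_min hε hε₂
    obtain ⟨δv, hδv, hvs⟩ := hsmall (ρ₂ / 2) (by positivity)
    set ρ₁ := min (ρ₂ / 2) δv with hρ₁def
    have hρ₁ : 0 < ρ₁ := lt_min (by positivity) hδv
    have h12 : ρ₁ < ρ₂ := lt_of_le_of_lt (min_le_left _ _) (half_lt_self hρ₂)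
    have hv : ∀ p ∈ ball x ρ₁, ‖f p - p‖ < ρ₂ - ρ₁ := by
      intro p hp
      have h1 : ‖f p - p‖ < ρ₂ / 2 := hvs p (ball_subset_ball (min_le_right _ _) hp)
      have h2 : ρ₁ ≤ ρ₂ / 2 := min_le_left _ _
      linarith
    refine build_aux f hfc K x hx N ρ₁ ρ₂ h12
      ((ball_subset_ball (min_le_left _ _)).trans hεN) hv
      (ball x ρ₁) isOpen_ball (mem_ball_self hρ₁) subset_rfl univ ?_ ?_
    · intro p _ hp t ht hK
      exfalso
      have hq : p + t • (f p - p) ∈ ball x ρ₂ := mem_ball_track hp (hv p hp) ht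
      exact hball2 (ball_subset_ball (min_le_right _ _) hq) hK
    · intro y hyU hy
      obtain ⟨α, h1, h2⟩ := straight_path x y ρ₁ hyU
      exact ⟨α, h1, by simpa using h2⟩
  · -- x ∈ K : use openness of Fix(f) ∩ K in K
    obtain ⟨O, hOopen, hOpre⟩ := isOpen_induced_iff.1 hKopen
    have hOfix : ∀ q ∈ K, q ∈ O → f q = q := by
      intro q hqK hqO
      have : (⟨q, hqK⟩ : K) ∈ (fun y : K => (y : E2)) ⁻¹' O := hqO
      rw [hOpre] at this
      exact this
    have hOx : x ∈ O := by
      have : (⟨x, hxK⟩ : K) ∈ (fun y : K => (y : E2)) ⁻¹' {z | f z = z} := hx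
      rw [← hOpre] at this
      exact this
    obtain ⟨εO, hεO, hballO⟩ := Metric.mem_nhds_iff.1 (hOopen.mem_nhds hOx)
    set B := fderiv ℝ f x - ContinuousLinearMap.id ℝ (EuclideanSpace ℝ (Fin 2)) with hBdef
    have hsv : HasStrictFDerivAt (fun z => f z - z) B x :=
      (hdiff.hasStrictFDerivAt one_ne_zero).sub (hasStrictFDerivAt_id x)
    by_cases hBinj : Injective B
    · -- the derivative of f - id at x is invertible : x is an isolated fixed point
      have hinj' : Injective (B : E2 →ₗ[ℝ] E2) := hBinj
      have hbij : Bijective (B : E2 →ₗ[ℝ] E2) :=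
        ⟨hinj', LinearMap.injective_iff_surjective.1 hinj'⟩
      set A := (LinearEquiv.ofBijective (B : E2 →ₗ[ℝ] E2) hbij).toContinuousLinearEquiv with hAdef
      have hAB : (A : E2 →L[ℝ] E2) = B := by ext z; rfl
      have hsv' : HasStrictFDerivAt (fun z => f z - z) (A : E2 →L[ℝ] E2) x := by
        rw [hAB]; exact hsv
      set Φ := hsv'.toOpenPartialHomeomorph (fun z => f z - z) with hΦdef
      have hxs : x ∈ Φ.source := hsv'.mem_toOpenPartialHomeomorph_source
      obtain ⟨δ₀, hδ₀, hball₀⟩ := Metric.mem_nhds_iff.1 (Φ.open_source.mem_nhds hxs)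
      set ρ := min ε δ₀ with hρdef
      have hρ : 0 < ρ := lt_min hε hδ₀
      refine ⟨ball x ρ, ball x ρ, isOpen_ball, isOpen_ball, mem_ball_self hρ, subset_rfl,
        (ball_subset_ball (min_le_left _ _)).trans hεN, ?_⟩
      intro y hyU hy
      have hyx : y = x := by
        have h1 : Φ y = Φ x := by
          have : (fun z => f z - z) y = (fun z => f z - z) x := by
            simp only [sub_eq_zero_of_eq hy, hvx]
          rw [hΦdef, hsv'.toOpenPartialHomeomorph_coe]; exact this
        exact Φ.injOn (hball₀ (ball_subset_ball (min_le_right _ _) hyU)) hxs h1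
      refine ⟨fun _ => x, ⟨continuousOn_const, rfl, hyx.symm⟩, ?_, ?_⟩
      · rintro z ⟨s, _, rfl⟩; exact mem_ball_self hρ
      · refine ⟨fun _ _ => x, continuousOn_const, ?_, ?_, ?_, ?_⟩
        · intro s _; exact ⟨rfl, by simp [Function.comp, hx]⟩
        · intro t _; exact ⟨rfl, hyx.symm⟩
        · intro s _ t₀ _ _ t _; rfl
        · intro t _ s _; exact mem_ball_self hρ
    · -- B is not injective
      have hem : ∃ k, k ≠ 0 ∧ B k = 0 := by
        rw [Injective] at hBinj
        push_neg at hBinj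
        obtain ⟨a, b, hab, hne⟩ := hBinj
        exact ⟨a - b, sub_ne_zero.2 hne, by rw [map_sub, hab, sub_self]⟩
      obtain ⟨k, hk0, hkB⟩ := hem
      by_cases hB0 : B = (0 : E2 →L[ℝ] E2)
      · -- B = 0 : contraction-type estimate, straight paths
        obtain ⟨δ, hδ, hest⟩ := strict_two_point hsv one_half_pos
        set ρ₂ := min ε (min εO δ) with hρ₂def
        have hρ₂ : 0 < ρ₂ := lt_min hε (lt_min hεO hδ)
        obtain ⟨δv, hδv, hvs⟩ := hsmall (ρ₂ / 2) (by positivity)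
        set ρ₁ := min (ρ₂ / 2) δv with hρ₁def
        have hρ₁ : 0 < ρ₁ := lt_min (by positivity) hδv
        have h12 : ρ₁ < ρ₂ := lt_of_le_of_lt (min_le_left _ _) (half_lt_self hρ₂)
        have hρ₂δ : ρ₂ ≤ δ := le_trans (min_le_right _ _) (min_le_right _ _)
        have hρ₂O : ρ₂ ≤ εO := le_trans (min_le_right _ _) (min_le_left _ _)
        have hv : ∀ p ∈ ball x ρ₁, ‖f p - p‖ < ρ₂ - ρ₁ := by
          intro p hp
          have h1 : ‖f p - p‖ < ρ₂ / 2 := hvs p (ball_subset_ball (min_le_right _ _) hp)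
          have h2 : ρ₁ ≤ ρ₂ / 2 := min_le_left _ _
          linarith
        refine build_aux f hfc K x hx N ρ₁ ρ₂ h12
          ((ball_subset_ball (min_le_left _ _)).trans hεN) hv
          (ball x ρ₁) isOpen_ball (mem_ball_self hρ₁) subset_rfl univ ?_ ?_
        · intro p _ hp t ht hqK
          set q := p + t • (f p - p) with hqdef
          have hq2 : q ∈ ball x ρ₂ := mem_ball_track hp (hv p hp) ht
          have hqfix : f q = q := hOfix q hqK (hballO (ball_subset_ball hρ₂O hq2))
          have hvq : f q - q = 0 := sub_eq_zero_of_eq hqfix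
          have hE := hest p (ball_subset_ball (le_trans h12.le hρ₂δ) hp)
            q (ball_subset_ball hρ₂δ hq2)
          rw [hvq, sub_zero, hB0] at hE
          have hpq : ‖p - q‖ ≤ ‖f p - p‖ := by
            have h1 : p - q = -(t • (f p - p)) := by rw [hqdef]; abel
            rw [h1, norm_neg, norm_smul, Real.norm_eq_abs, abs_of_nonneg ht.1]
            calc t * ‖f p - p‖ ≤ 1 * ‖f p - p‖ :=
                mul_le_mul_of_nonneg_right ht.2 (norm_nonneg _)
              _ = ‖f p - p‖ := one_mul _
          have h0 : ‖f p - p‖ = 0 := by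
            simp only [ContinuousLinearMap.zero_apply, sub_zero] at hE
            have := norm_nonneg (f p - p)
            linarith
          exact sub_eq_zero.1 (norm_eq_zero.1 h0)
        · intro y hyU hy
          obtain ⟨α, h1, h2⟩ := straight_path x y ρ₁ hyU
          exact ⟨α, h1, by simpa using h2⟩
      · -- rank-one case
        obtain ⟨u, hu⟩ : ∃ u, B u ≠ 0 := by
          by_contra h
          push_neg at h
          exact hB0 (ContinuousLinearMap.ext fun z => by simp [h z])
        set e : E2 := ‖B u‖⁻¹ • B u with hedef
        have he : ‖e‖ = 1 := norm_e B u hu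
        have hrep := inner_rep B u hu (range_span B u k hu hk0 hkB)
        have hkersp := ker_span B u k hu hk0 hkB
        set ξ : E2 →L[ℝ] ℝ := (innerSL ℝ e).comp B with hξdef
        set L : E2 →L[ℝ] ℝ × ℝ := ξ.prod (innerSL ℝ k) with hLdef
        have hLinj : Injective L := by
          intro a b hab
          have hz : L (a - b) = 0 := by rw [map_sub, hab, sub_self]
          have h1 : ⟪e, B (a - b)⟫ = 0 := congrArg Prod.fst hz
          have h2 : ⟪k, a - b⟫ = (0:ℝ) := congrArg Prod.snd hz
          have hB0' : B (a - b) = 0 := by rw [← hrep (a - b), h1, zero_smul]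
          obtain ⟨c, hc⟩ := hkersp _ hB0'
          rw [hc, real_inner_smul_right, real_inner_self_eq_norm_sq] at h2
          have hkn : ‖k‖ ≠ 0 := norm_ne_zero_iff.2 hk0
          have hc0 : c = 0 := by
            rcases mul_eq_zero.1 h2 with h | h
            · exact h
            · exact absurd h (by positivity)
          have : a - b = 0 := by rw [hc, hc0, zero_smul]
          exact sub_eq_zero.1 this
        have hLinj' : Injective (L : E2 →ₗ[ℝ] ℝ × ℝ) := hLinj
        have hfr : Module.finrank ℝ E2 = Module.finrank ℝ (ℝ × ℝ) := by simp
        have hLsurj : Surjective (L : E2 →ₗ[ℝ] ℝ × ℝ) :=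
          (LinearMap.injective_iff_surjective_of_finrank_eq_finrank hfr).1 hLinj'
        set A := (LinearEquiv.ofBijective (L : E2 →ₗ[ℝ] ℝ × ℝ)
          ⟨hLinj', hLsurj⟩).toContinuousLinearEquiv with hAdef
        have hAL : (A : E2 →L[ℝ] ℝ × ℝ) = L := by ext z <;> rfl
        set G : E2 → ℝ × ℝ := fun z => ((innerSL ℝ e) (f z - z), (innerSL ℝ k) z) with hGdef
        have hG : HasStrictFDerivAt G (A : E2 →L[ℝ] ℝ × ℝ) x := by
          rw [hAL, hLdef]
          exact ((innerSL ℝ e).hasStrictFDerivAt.comp x hsv).prodMk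
            (innerSL ℝ k).hasStrictFDerivAt
        set Φ := hG.toOpenPartialHomeomorph G with hΦdef
        have hΦG : (Φ : E2 → ℝ × ℝ) = G := hG.toOpenPartialHomeomorph_coe
        have hxs : x ∈ Φ.source := hG.mem_toOpenPartialHomeomorph_source
        -- constants
        obtain ⟨δ, hδ, hest⟩ := strict_two_point hsv (by norm_num : (0:ℝ) < 1/4)
        set ρ₂ := min ε (min εO δ) with hρ₂def
        have hρ₂ : 0 < ρ₂ := lt_min hε (lt_min hεO hδ)
        obtain ⟨δv, hδv, hvs⟩ := hsmall (ρ₂ / 2) (by positivity)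
        set ρ₁ := min (ρ₂ / 2) δv with hρ₁def
        have hρ₁ : 0 < ρ₁ := lt_min (by positivity) hδv
        have h12 : ρ₁ < ρ₂ := lt_of_le_of_lt (min_le_left _ _) (half_lt_self hρ₂)
        have hρ₂δ : ρ₂ ≤ δ := le_trans (min_le_right _ _) (min_le_right _ _)
        have hρ₂O : ρ₂ ≤ εO := le_trans (min_le_right _ _) (min_le_left _ _)
        have hv : ∀ p ∈ ball x ρ₁, ‖f p - p‖ < ρ₂ - ρ₁ := by
          intro p hp
          have h1 : ‖f p - p‖ < ρ₂ / 2 := hvs p (ball_subset_ball (min_le_right _ _) hp)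
          have h2 : ρ₁ ≤ ρ₂ / 2 := min_le_left _ _
          linarith
        -- the open set U
        set W := Φ.target ∩ Φ.symm ⁻¹' (ball x ρ₁ ∩ Φ.source) with hWdef
        have hWopen : IsOpen W := Φ.isOpen_inter_preimage_symm (isOpen_ball.inter Φ.open_source)
        have hGxW : Φ x ∈ W := by
          refine ⟨Φ.map_source hxs, ?_⟩
          rw [mem_preimage, Φ.left_inv hxs]
          exact ⟨mem_ball_self hρ₁, hxs⟩
        obtain ⟨r, hr, hrW⟩ := Metric.mem_nhds_iff.1 (hWopen.mem_nhds hGxW)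
        set U := ball x ρ₁ ∩ (Φ.source ∩ Φ ⁻¹' ball (Φ x) r) with hUdef
        have hUopen : IsOpen U := isOpen_ball.inter (Φ.isOpen_inter_preimage isOpen_ball)
        have hxU : x ∈ U := ⟨mem_ball_self hρ₁, hxs, mem_ball_self hr⟩
        have hGx1 : (G x).1 = 0 := by simp [hGdef, hvx]
        refine build_aux f hfc K x hx N ρ₁ ρ₂ h12
          ((ball_subset_ball (min_le_left _ _)).trans hεN) hv
          U hUopen hxU (fun z hz => hz.1) {z : E2 | ⟪e, f z - z⟫ = 0} ?_ ?_
        · -- the key rel-K estimate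
          intro p hpΓ hp t ht hqK
          set q := p + t • (f p - p) with hqdef
          have hq2 : q ∈ ball x ρ₂ := mem_ball_track hp (hv p hp) ht
          have hqfix : f q = q := hOfix q hqK (hballO (ball_subset_ball hρ₂O hq2))
          have hvq : f q - q = 0 := sub_eq_zero_of_eq hqfix
          have hE := hest p (ball_subset_ball (le_trans h12.le hρ₂δ) hp)
            q (ball_subset_ball hρ₂δ hq2)
          rw [hvq, sub_zero] at hE
          set w := f p - p - B (p - q) with hwdef
          have hBest : ‖B (p - q)‖ ≤ 1/4 * ‖p - q‖ := by
            have hn1 : ‖B (p - q)‖ = |⟪e, B (p - q)⟫| := by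
              conv_lhs => rw [← hrep (p - q)]
              rw [norm_smul, he, mul_one, Real.norm_eq_abs]
            have hiw2 : ⟪e, w⟫ = ⟪e, f p - p⟫ - ⟪e, B (p - q)⟫ := by
              rw [hwdef, inner_sub_right]
            have hip : ⟪e, B (p - q)⟫ = ⟪e, f p - p⟫ - ⟪e, w⟫ := by linarith
            have hφp : ⟪e, f p - p⟫ = (0:ℝ) := hpΓ
            have hiw : |⟪e, w⟫| ≤ ‖w‖ := by
              calc |⟪e, w⟫| ≤ ‖e‖ * ‖w‖ := abs_real_inner_le_norm e w
                _ = ‖w‖ := by rw [he, one_mul]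
            rw [hn1, hip, hφp, zero_sub, abs_neg]
            exact le_trans hiw hE
          have hfp : f p - p = w + B (p - q) := by rw [hwdef]; abel
          have hnfp : ‖f p - p‖ ≤ 1/2 * ‖p - q‖ := by
            calc ‖f p - p‖ ≤ ‖w‖ + ‖B (p - q)‖ := by rw [hfp]; exact norm_add_le _ _
              _ ≤ 1/4 * ‖p - q‖ + 1/4 * ‖p - q‖ := add_le_add hE hBest
              _ = 1/2 * ‖p - q‖ := by ring
          have hpq : ‖p - q‖ ≤ ‖f p - p‖ := by
            have h1 : p - q = -(t • (f p - p)) := by rw [hqdef]; abel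
            rw [h1, norm_neg, norm_smul, Real.norm_eq_abs, abs_of_nonneg ht.1]
            calc t * ‖f p - p‖ ≤ 1 * ‖f p - p‖ :=
                mul_le_mul_of_nonneg_right ht.2 (norm_nonneg _)
              _ = ‖f p - p‖ := one_mul _
          have h0 : ‖f p - p‖ = 0 := by
            have := norm_nonneg (f p - p)
            linarith
          exact sub_eq_zero.1 (norm_eq_zero.1 h0)
        · -- the path inside U ∩ Γ
          intro y hyU hy
          have hy1 : (G y).1 = 0 := by simp [hGdef, sub_eq_zero_of_eq hy]
          have hGyx : G y = ((0:ℝ), (G y).2) := by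
            rw [← hy1]
          have hGxx : G x = ((0:ℝ), (G x).2) := by
            rw [← hGx1]
          set zx := (G x).2 with hzxdef
          set zy := (G y).2 with hzydef
          have hys : y ∈ Φ.source := hyU.2.1
          have hyb : Φ y ∈ ball (Φ x) r := hyU.2.2
          set c : ℝ → ℝ × ℝ := fun s => ((0:ℝ), zx + s * (zy - zx)) with hcdef
          have hcball : ∀ s ∈ Icc (0:ℝ) 1, c s ∈ ball (Φ x) r := by
            intro s hs
            rw [mem_ball]
            have h1 : dist (c s) (Φ x) = |s| * |zy - zx| := by
              rw [hΦG, hGxx, hcdef, Prod.dist_eq]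
              simp only [Real.dist_eq]
              rw [max_eq_right (by simpa using abs_nonneg (zx + s * (zy - zx) - zx))]
              have : zx + s * (zy - zx) - zx = s * (zy - zx) := by ring
              rw [this, abs_mul]
            have h2 : |zy - zx| ≤ dist (Φ y) (Φ x) := by
              rw [hΦG, hGxx, hGyx, Prod.dist_eq]
              calc |zy - zx| = dist zy zx := (Real.dist_eq _ _).symm
                _ ≤ max (dist (0:ℝ) 0) (dist zy zx) := le_max_right _ _
            have habs : |s| ≤ 1 := by rw [abs_le]; exact ⟨by linarith [hs.1], hs.2⟩
            calc dist (c s) (Φ x) = |s| * |zy - zx| := h1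
              _ ≤ 1 * |zy - zx| := mul_le_mul_of_nonneg_right habs (abs_nonneg _)
              _ = |zy - zx| := one_mul _
              _ ≤ dist (Φ y) (Φ x) := h2
              _ < r := mem_ball.1 hyb
          have hcW : ∀ s ∈ Icc (0:ℝ) 1, c s ∈ W := fun s hs => hrW (hcball s hs)
          refine ⟨fun s => Φ.symm (c s), ⟨?_, ?_, ?_⟩, ?_⟩
          · refine Φ.continuousOn_symm.comp ?_ (fun s hs => (hcW s hs).1)
            exact (continuous_const.prodMk
              (continuous_const.add (continuous_id.mul continuous_const))).continuousOn
          · have hc0 : c 0 = Φ x := by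
              rw [hΦG, hGxx, hcdef]; simp
            show Φ.symm (c 0) = x
            rw [hc0, Φ.left_inv hxs]
          · have hc1 : c 1 = Φ y := by
              rw [hΦG, hGyx, hcdef]; simp
            show Φ.symm (c 1) = y
            rw [hc1, Φ.left_inv hys]
          · rintro z ⟨s, hs, rfl⟩
            have hW := hcW s hs
            have htgt : c s ∈ Φ.target := hW.1
            have hmem : Φ.symm (c s) ∈ ball x ρ₁ ∩ Φ.source := hW.2
            have hΦval : Φ (Φ.symm (c s)) = c s := Φ.right_inv htgt
            constructor
            · exact ⟨hmem.1, hmem.2, by rw [mem_preimage, hΦval]; exact hcball s hs⟩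
            · show ⟪e, f (Φ.symm (c s)) - Φ.symm (c s)⟫ = (0:ℝ)
              have : (G (Φ.symm (c s))).1 = (c s).1 := by rw [← hΦG, hΦval]
              simpa [hGdef, hcdef] using this
end

section
/- Let G be a group acting on a set S and let i : S × S → ℕ be a G-invariant function, i.e. i(g·γ, g·δ) = i(γ, δ) for all g ∈ G and γ, δ ∈ S. For α ∈ G set Per(α) = {γ ∈ S : there exists n ≥ 1 with α^n·γ = γ} and Per₀(α) = {γ ∈ Per(α) : i(γ, δ) = 0 for all δ ∈ Per(α)}. Let A ⊆ G be a set of pairwise commuting elements, and set Per(A) = ⋂_{α ∈ A} Per(α) and Per₀(A) = {γ ∈ Per(A) : i(γ, δ) = 0 for all δ ∈ Per(A)}. If Per₀(α) is finite for every α ∈ A, then Per₀(α) ⊆ Per₀(A) for every α ∈ A; in particular ⋃_{α ∈ A} Per₀(α) ⊆ Per₀(A), and this union is mapped onto itself by every β ∈ A. -/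
/-- The set of `α`-periodic points of the action of `G` on `S`. -/
def Per {G : Type*} (S : Type*) [Group G] [MulAction G S] (α : G) : Set S :=
  {γ | ∃ n ≥ 1, α ^ n • γ = γ}

/-- The `α`-periodic points having zero `i`-intersection with every `α`-periodic point. -/
def Per₀ {G S : Type*} [Group G] [MulAction G S] (i : S × S → ℕ) (α : G) : Set S :=
  {γ ∈ Per S α | ∀ δ ∈ Per S α, i (γ, δ) = 0}

/-- The points periodic under every element of `A`. -/
def PerSet {G : Type*} (S : Type*) [Group G] [MulAction G S] (A : Set G) : Set S :=
  ⋂ α ∈ A, Per S α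

/-- The `A`-periodic points having zero `i`-intersection with every `A`-periodic point. -/
def Per₀Set {G S : Type*} [Group G] [MulAction G S] (i : S × S → ℕ) (A : Set G) : Set S :=
  {γ ∈ PerSet S A | ∀ δ ∈ PerSet S A, i (γ, δ) = 0}

lemma smul_mem_Per {G S : Type*} [Group G] [MulAction G S] {α β : G}
    (h : Commute α β) {γ : S} (hγ : γ ∈ Per S α) : β • γ ∈ Per S α := by
  obtain ⟨n, hn, hfix⟩ := hγ
  exact ⟨n, hn, by rw [smul_smul, (h.pow_left n).eq, mul_smul, hfix]⟩

lemma smul_mem_Per₀ {G S : Type*} [Group G] [MulAction G S] (i : S × S → ℕ)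
    (hi : ∀ (g : G) (γ δ : S), i (g • γ, g • δ) = i (γ, δ)) {α β : G}
    (h : Commute α β) {γ : S} (hγ : γ ∈ Per₀ i α) : β • γ ∈ Per₀ i α := by
  obtain ⟨hp, hz⟩ := hγ
  refine ⟨smul_mem_Per h hp, fun δ hδ => ?_⟩
  have h2 : β⁻¹ • δ ∈ Per S α := smul_mem_Per h.inv_right hδ
  have h3 := hi β γ (β⁻¹ • δ)
  rw [smul_inv_smul] at h3
  exact h3.trans (hz _ h2)

lemma mem_Per_of_finite {G S : Type*} [Group G] [MulAction G S] (i : S × S → ℕ)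
    (hi : ∀ (g : G) (γ δ : S), i (g • γ, g • δ) = i (γ, δ)) {α β : G}
    (h : Commute α β) (hfin : (Per₀ i α).Finite) {γ : S} (hγ : γ ∈ Per₀ i α) :
    γ ∈ Per S β := by
  haveI := hfin.to_subtype
  have key : ∀ m k : ℕ, m < k → β ^ m • γ = β ^ k • γ → γ ∈ Per S β := by
    intro m k hlt heq
    refine ⟨k - m, by omega, smul_left_cancel (β ^ m) ?_⟩
    rw [smul_smul, ← pow_add, Nat.add_sub_cancel' (le_of_lt hlt)]
    exact heq.symm
  obtain ⟨m, k, hmk, heq⟩ := Finite.exists_ne_map_eq_of_infinite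
    (fun n : ℕ => (⟨β ^ n • γ, smul_mem_Per₀ i hi (h.pow_right n) hγ⟩ : (Per₀ i α)))
  have heq' : β ^ m • γ = β ^ k • γ := congrArg Subtype.val heq
  rcases lt_or_gt_of_ne hmk with hlt | hlt
  · exact key m k hlt heq'
  · exact key k m hlt heq'.symm

/-- If `A` is a set of pairwise commuting elements with each `Per₀ α` finite,
then `Per₀ α ⊆ Per₀ A` for every `α ∈ A`; in particular `⋃_{α ∈ A} Per₀ α ⊆ Per₀ A`, and
this union is mapped onto itself by every `β ∈ A`. -/
theorem stmt_13 {G S : Type*} [Group G] [MulAction G S] (i : S × S → ℕ)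
    (hi : ∀ (g : G) (γ δ : S), i (g • γ, g • δ) = i (γ, δ))
    (A : Set G) (hcomm : ∀ α ∈ A, ∀ β ∈ A, α * β = β * α)
    (hfin : ∀ α ∈ A, (Per₀ i α).Finite) :
    (∀ α ∈ A, Per₀ i α ⊆ Per₀Set i A) ∧
    (⋃ α ∈ A, Per₀ i α) ⊆ Per₀Set i A ∧
    (∀ β ∈ A, (fun γ : S => β • γ) '' (⋃ α ∈ A, Per₀ i α) = ⋃ α ∈ A, Per₀ i α) := by
  have hsub : ∀ α ∈ A, Per₀ i α ⊆ Per₀Set i A := by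
    intro α hα γ hγ
    have hmem : γ ∈ PerSet S A := by
      simp only [PerSet, Set.mem_iInter]
      intro β hβ
      exact mem_Per_of_finite i hi (hcomm α hα β hβ) (hfin α hα) hγ
    refine ⟨hmem, fun δ hδ => ?_⟩
    have hδα : δ ∈ Per S α := by
      simp only [PerSet, Set.mem_iInter] at hδ; exact hδ α hα
    exact hγ.2 δ hδα
  refine ⟨hsub, ?_, ?_⟩
  · intro γ hγ
    simp only [Set.mem_iUnion] at hγ
    obtain ⟨α, hα, hm⟩ := hγ
    exact hsub α hα hm
  · intro β hβ
    apply Set.Subset.antisymm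
    · rintro _ ⟨γ, hγ, rfl⟩
      simp only [Set.mem_iUnion] at hγ ⊢
      obtain ⟨α, hα, hm⟩ := hγ
      exact ⟨α, hα, smul_mem_Per₀ i hi (hcomm α hα β hβ) hm⟩
    · intro γ hγ
      simp only [Set.mem_iUnion] at hγ
      obtain ⟨α, hα, hm⟩ := hγ
      refine ⟨β⁻¹ • γ, ?_, smul_inv_smul β γ⟩
      simp only [Set.mem_iUnion]
      exact ⟨α, hα, smul_mem_Per₀ i hi
        (Commute.inv_right (hcomm α hα β hβ : Commute α β)) hm⟩
end
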